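/- Let n = 2r be an even positive integer and let s, s' be integers with 1 ≤ s, s' ≤ r − 1, s' ≠ s and s' ≠ r − s. Then the invariant subspaces V_s and V_{s'} are inequivalent: there is no ℂ-linear bijection φ : V_s → V_{s'} satisfying φ(λ_t u) = λ_t(φ(u)) for all t ∈ ZMod n and all u ∈ V_s. -/

import Mathlib

/-- The regular representation of the dihedral quandle `R_n = Quandle.dihedral n`
(`ZMod n` with `x ◃ y = 2y - x`) on functions `ZMod n → ℂ`:
`(λ_t f)(x) = f (2t - x)`. -/
def lam (n : ℕ) (t : ZMod n) (f : ZMod n → ℂ) : ZMod n → ℂ :=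
  fun x => f (2 * t - x)

/-- `ω = exp(2πi/n)`. -/
noncomputable def dihedralOmega (n : ℕ) : ℂ :=
  Complex.exp (2 * Real.pi * Complex.I / n)

/-- The character `f_s : ZMod n → ℂ`, `f_s(x) = ω^{s·x.val}`. -/
noncomputable def chi (n : ℕ) (s : ℤ) : ZMod n → ℂ :=
  fun x => dihedralOmega n ^ (s * (x.val : ℤ))

/-- `V_s`: the `ℂ`-linear span of `{f_s, f_{-s}}` in `ZMod n → ℂ`. -/
noncomputable def Vsub (n : ℕ) (s : ℤ) : Submodule ℂ (ZMod n → ℂ) :=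
  Submodule.span ℂ {chi n s, chi n (-s)}

/-- For even `n = 2r > 0` and integers `1 ≤ s, s' ≤ r - 1` with `s' ≠ s` and
`s' ≠ r - s`, the invariant subspaces `V_s` and `V_{s'}` of the regular
representation of `R_n` are inequivalent: there is no `ℂ`-linear bijection
`φ : V_s → V_{s'}` intertwining all the operators `λ_t`. -/
theorem Vs_inequivalent_even (n r : ℕ) (hn : n = 2 * r) (hpos : 0 < n) (s s' : ℤ)
    (hs1 : 1 ≤ s) (hs2 : s ≤ (r : ℤ) - 1) (hs'1 : 1 ≤ s') (hs'2 : s' ≤ (r : ℤ) - 1)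
    (hne : s' ≠ s) (hner : s' ≠ (r : ℤ) - s) :
    ¬ ∃ φ : ↥(Vsub n s) →ₗ[ℂ] ↥(Vsub n s'),
        Function.Bijective φ ∧
        ∀ (t : ZMod n) (u w : ↥(Vsub n s)),
          (w : ZMod n → ℂ) = lam n t ↑u →
          ((φ w : ↥(Vsub n s')) : ZMod n → ℂ) = lam n t ↑(φ u) := by
  rintro ⟨φ, hbij, hcomm⟩
  haveI : NeZero n := ⟨hpos.ne'⟩
  have hr2 : (2 : ℤ) ≤ (r : ℤ) := by omega
  have hn4 : 4 ≤ n := by omega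
  set ω := dihedralOmega n with hωdef
  have hprim : IsPrimitiveRoot ω n := by
    simpa [dihedralOmega, hωdef] using Complex.isPrimitiveRoot_exp n hpos.ne'
  have hω0 : ω ≠ 0 := by
    rw [hωdef, dihedralOmega]; exact Complex.exp_ne_zero _
  have hiff : ∀ j k : ℤ, ω ^ j = ω ^ k ↔ (n : ℤ) ∣ (j - k) := by
    intro j k
    rw [← hprim.zpow_eq_one_iff_dvd, zpow_sub₀ hω0,
      div_eq_one_iff_eq (zpow_ne_zero _ hω0)]
  have hone : (1 : ZMod n).val = 1 := by
    rw [← Nat.cast_one, ZMod.val_cast_of_lt (by omega)]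
  -- action of lam on characters
  have hlam : ∀ (t : ZMod n) (u : ℤ),
      lam n t (chi n u) = (ω ^ (2 * u * (t.val : ℤ))) • chi n (-u) := by
    intro t u
    funext x
    show ω ^ (u * (((2 * t - x).val : ℕ) : ℤ))
        = ω ^ (2 * u * (t.val : ℤ)) * chi n (-u) x
    show ω ^ (u * (((2 * t - x).val : ℕ) : ℤ))
        = ω ^ (2 * u * (t.val : ℤ)) * ω ^ ((-u) * ((x.val : ℕ) : ℤ))
    rw [← zpow_add₀ hω0, hiff]
    have h1 : (n : ℤ) ∣ (((2 * t - x).val : ℤ) - (2 * (t.val : ℤ) - (x.val : ℤ))) := by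
      rw [← ZMod.intCast_zmod_eq_zero_iff_dvd]
      push_cast [ZMod.natCast_val, ZMod.cast_id]
      ring
    have h2 : (n : ℤ) ∣ u * (((2 * t - x).val : ℤ) - (2 * (t.val : ℤ) - (x.val : ℤ))) :=
      h1.mul_left u
    convert h2 using 1
    ring
  have hlam_smul : ∀ (t : ZMod n) (c : ℂ) (f : ZMod n → ℂ),
      lam n t (c • f) = c • lam n t f := fun _ _ _ => rfl
  have hlam_add : ∀ (t : ZMod n) (f g : ZMod n → ℂ),
      lam n t (f + g) = lam n t f + lam n t g := fun _ _ _ => rfl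
  have hAA : ∀ u : ℤ, lam n 0 (lam n 1 (chi n u)) = (ω ^ (2 * u)) • chi n u := by
    intro u
    rw [hlam 1 u, hlam_smul, hlam 0 (-u), neg_neg]
    simp [hone, ZMod.val_zero, smul_smul]
  -- character values
  have hchi0 : ∀ u : ℤ, chi n u 0 = 1 := by
    intro u; show ω ^ (u * (((0 : ZMod n).val : ℕ) : ℤ)) = 1
    simp [ZMod.val_zero]
  have hchi1 : ∀ u : ℤ, chi n u 1 = ω ^ u := by
    intro u; show ω ^ (u * (((1 : ZMod n).val : ℕ) : ℤ)) = ω ^ u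
    simp [hone]
  -- the elements
  have hmem_s : chi n s ∈ Vsub n s := Submodule.subset_span (Set.mem_insert _ _)
  have hmem_ms : chi n (-s) ∈ Vsub n s :=
    Submodule.subset_span (Set.mem_insert_of_mem _ rfl)
  set u₀ : ↥(Vsub n s) := ⟨chi n s, hmem_s⟩ with hu₀
  have hw₁mem : lam n 1 (chi n s) ∈ Vsub n s := by
    rw [hlam 1 s]; exact Submodule.smul_mem _ _ hmem_ms
  set w₁ : ↥(Vsub n s) := ⟨lam n 1 (chi n s), hw₁mem⟩ with hw₁
  set w₂ : ↥(Vsub n s) := (ω ^ (2 * s)) • u₀ with hw₂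
  have h1 : ((φ w₁ : ↥(Vsub n s')) : ZMod n → ℂ) = lam n 1 ((φ u₀ : ↥(Vsub n s')) : ZMod n → ℂ) :=
    hcomm 1 u₀ w₁ rfl
  have h₂coe : ((w₂ : ↥(Vsub n s)) : ZMod n → ℂ) = lam n 0 ((w₁ : ↥(Vsub n s)) : ZMod n → ℂ) := by
    show (ω ^ (2 * s)) • chi n s = lam n 0 (lam n 1 (chi n s))
    exact (hAA s).symm
  have h2 : ((φ w₂ : ↥(Vsub n s')) : ZMod n → ℂ) = lam n 0 ((φ w₁ : ↥(Vsub n s')) : ZMod n → ℂ) :=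
    hcomm 0 w₁ w₂ h₂coe
  set g : ZMod n → ℂ := ((φ u₀ : ↥(Vsub n s')) : ZMod n → ℂ) with hg
  have key : (ω ^ (2 * s)) • g = lam n 0 (lam n 1 g) := by
    rw [h1] at h2
    rw [hw₂, map_smul] at h2
    simpa [hg] using h2
  obtain ⟨a, b, hab⟩ := Submodule.mem_span_pair.mp (φ u₀).2
  have hab' : a • chi n s' + b • chi n (-s') = g := hab
  rw [← hab'] at key
  rw [hlam_add, hlam_smul, hlam_smul, hlam_add, hlam_smul, hlam_smul,
    hAA s', hAA (-s')] at key
  have e0 := congrFun key 0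
  have e1 := congrFun key 1
  simp only [Pi.add_apply, Pi.smul_apply, smul_eq_mul, hchi0, hchi1, mul_one] at e0 e1
  -- inequalities between roots of unity
  have hnZ : (n : ℤ) = 2 * (r : ℤ) := by exact_mod_cast congrArg (Nat.cast : ℕ → ℤ) hn
  have hd1 : ω ^ (2 * s') ≠ ω ^ (2 * s) := by
    intro h
    have hd := (hiff _ _).mp h
    rw [hnZ] at hd
    obtain ⟨k, hk⟩ := hd
    have hk' : s' - s = (r : ℤ) * k := by linarith
    have := Int.eq_zero_of_abs_lt_dvd ⟨k, hk'⟩ (by rw [abs_lt]; omega)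
    omega
  have hd2 : ω ^ (2 * -s') ≠ ω ^ (2 * s) := by
    intro h
    have hd := (hiff _ _).mp h
    rw [hnZ] at hd
    obtain ⟨k, hk⟩ := hd
    have hk' : s' + s - (r : ℤ) = (r : ℤ) * (-k - 1) := by ring_nf; ring_nf at hk; linarith
    have := Int.eq_zero_of_abs_lt_dvd ⟨(-k - 1), hk'⟩ (by rw [abs_lt]; omega)
    omega
  have hd3 : ω ^ (s' : ℤ) ≠ ω ^ (-s') := by
    intro h
    have hd := (hiff _ _).mp h
    rw [hnZ] at hd
    have := Int.le_of_dvd (by omega) hd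
    omega
  have ha : a = 0 := by
    have hz : a * (ω ^ (2 * s') - ω ^ (2 * s)) * (ω ^ (s' : ℤ) - ω ^ (-s')) = 0 := by
      linear_combination ω ^ (-s') * e0 - e1
    rcases mul_eq_zero.mp hz with hz' | hz'
    · rcases mul_eq_zero.mp hz' with h | h
      · exact h
      · exact absurd (sub_eq_zero.mp h) hd1
    · exact absurd (sub_eq_zero.mp hz') hd3
  have hb : b = 0 := by
    have hz : b * (ω ^ (2 * -s') - ω ^ (2 * s)) * (ω ^ (-s') - ω ^ (s' : ℤ)) = 0 := by
      linear_combination ω ^ (s' : ℤ) * e0 - e1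
    rcases mul_eq_zero.mp hz with hz' | hz'
    · rcases mul_eq_zero.mp hz' with h | h
      · exact h
      · exact absurd (sub_eq_zero.mp h) hd2
    · exact absurd (sub_eq_zero.mp hz') (fun h => hd3 h.symm)
  have hgz : g = 0 := by rw [← hab', ha, hb]; simp
  have hφz : φ u₀ = 0 := Subtype.ext (by simpa [hg] using hgz)
  have hu₀z : u₀ = 0 := hbij.1 (by rw [hφz, map_zero])
  have : chi n s 0 = 0 := by
    have hc : chi n s = 0 := congrArg Subtype.val hu₀z
    rw [hc]; rfl
  rw [hchi0 s] at this
  exact one_ne_zero this
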